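/- Let F ⊆ S_n be a t-cycle-intersecting family that is maximal, fixed and compressed, and let g be a generating set in G_*(F). For E ∈ g define D(E) = {σ ∈ S_n : fix(σ) ∩ [s⁺(E)] = E}. Then F is the disjoint union over E ∈ g of the sets D(E); that is, F = ∪_{E∈g} D(E) and D(E_1) ∩ D(E_2) = ∅ for distinct E_1, E_2 ∈ g. -/

import Mathlib

open Equiv Finset
open scoped Classical

noncomputable section

/-- A common cycle of two permutations `σ` and `π`: a nonempty subset `B` invariant
under both, on which they agree, and on which `σ` acts as a single cycle. -/
def IsCommonCycle {n : ℕ} (σ π : Equiv.Perm (Fin n)) (B : Finset (Fin n)) : Prop :=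
  B.Nonempty ∧ (∀ x ∈ B, σ x ∈ B) ∧ (∀ x ∈ B, π x ∈ B) ∧
  (∀ x ∈ B, σ x = π x) ∧ (∀ x ∈ B, ∀ y ∈ B, σ.SameCycle x y)

/-- A family of permutations is `t`-cycle-intersecting if any two of its members
have at least `t` common cycles on pairwise disjoint subsets. -/
def TCycleIntersecting {n : ℕ} (t : ℕ) (F : Set (Equiv.Perm (Fin n))) : Prop :=
  ∀ σ ∈ F, ∀ π ∈ F, ∃ 𝒞 : Finset (Finset (Fin n)),
    t ≤ 𝒞.card ∧ (∀ B ∈ 𝒞, IsCommonCycle σ π B) ∧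
    (𝒞 : Set (Finset (Fin n))).Pairwise fun A B => Disjoint A B

/-- The `ij`-fixing of a permutation: if `σ i = j` then make `i` a fixed point and
send `σ⁻¹ i` to `j`, leaving everything else unchanged. -/
def ijFix {n : ℕ} (i j : Fin n) (σ : Equiv.Perm (Fin n)) : Equiv.Perm (Fin n) :=
  if σ i = j then σ * Equiv.swap i (σ⁻¹ i) else σ

/-- The `ij`-fixing operation on a family of permutations. -/
def fixFamOp {n : ℕ} (i j : Fin n) (A : Set (Equiv.Perm (Fin n))) :
    Set (Equiv.Perm (Fin n)) :=
  (fun σ => if ijFix i j σ ∈ A then σ else ijFix i j σ) '' A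

/-- A family is fixed if it is closed under all `ij`-fixing operations. -/
def IsFixedFam {n : ℕ} (A : Set (Equiv.Perm (Fin n))) : Prop :=
  ∀ i j : Fin n, i ≠ j → fixFamOp i j A = A

/-- The `(i,j)`-compression of a permutation: if `σ i ≠ i` and `σ j = j`, then
fix `i`, send `j` to `σ i` and `σ⁻¹ i` to `j`; otherwise leave `σ` unchanged. -/
def compPerm {n : ℕ} (i j : Fin n) (σ : Equiv.Perm (Fin n)) : Equiv.Perm (Fin n) :=
  if σ i ≠ i ∧ σ j = j then (Equiv.swap i (σ i) * Equiv.swap i j) * σ else σ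

/-- The `(i,j)`-compression operation on a family of permutations. -/
def compFam {n : ℕ} (i j : Fin n) (A : Set (Equiv.Perm (Fin n))) :
    Set (Equiv.Perm (Fin n)) :=
  (fun σ => if compPerm i j σ ∈ A then σ else compPerm i j σ) '' A

/-- A family is compressed if it is closed under all `(i,j)`-compressions. -/
def IsCompressedFam {n : ℕ} (A : Set (Equiv.Perm (Fin n))) : Prop :=
  ∀ i j : Fin n, i < j → compFam i j A = A

/-- `F` is the stabilizer of `t` points: there are `t` distinct points such that `F`
consists exactly of the permutations fixing all of them. -/
def IsTPointStabilizer {n : ℕ} (t : ℕ) (F : Set (Equiv.Perm (Fin n))) : Prop :=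
  ∃ a : Fin t ↪ Fin n, F = {σ | ∀ k, σ (a k) = a k}

/-- The set of fixed points of a permutation. -/
def fixSet {n : ℕ} (σ : Equiv.Perm (Fin n)) : Finset (Fin n) :=
  Finset.univ.filter fun x => σ x = x

/-- The up-permutation of a set `B`: all permutations fixing every element of `B`. -/
def UpSet {n : ℕ} (B : Finset (Fin n)) : Set (Equiv.Perm (Fin n)) :=
  {σ | ∀ x ∈ B, σ x = x}

/-- The up-permutation of a collection of sets. -/
def UpFam {n : ℕ} (g : Set (Finset (Fin n))) : Set (Equiv.Perm (Fin n)) :=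
  ⋃ B ∈ g, UpSet B

/-- `g` is a generating set for `F`: it contains no set of size `n-1` and
`Up(g) = F`. -/
def IsGenSet {n : ℕ} (g : Set (Finset (Fin n))) (F : Set (Equiv.Perm (Fin n))) : Prop :=
  (∀ B ∈ g, B.card ≠ n - 1) ∧ UpFam g = F

/-- `s⁺(B)`: the largest element of `B`, in the 1-based numbering of `[n] = {1,…,n}`
(so `s⁺(∅) = 0`). -/
def sPlus {n : ℕ} (B : Finset (Fin n)) : ℕ := B.sup fun x => (x : ℕ) + 1

/-- `s⁺(g) = max {s⁺(B) : B ∈ g}`. -/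
def sPlusFam {n : ℕ} (g : Set (Finset (Fin n))) : ℕ := sSup (sPlus '' g)

/-- `s_min(G(F)) = min {s⁺(g) : g a generating set of F}`. -/
def sMin {n : ℕ} (F : Set (Equiv.Perm (Fin n))) : ℕ :=
  sInf (sPlusFam '' {g | IsGenSet g F})

/-- `L(B)`: all sets obtained from `B` by left-shifting, i.e. sets of the same size
whose `i`-th smallest element is at most the `i`-th smallest element of `B`. -/
def LSet {n : ℕ} (B : Finset (Fin n)) : Set (Finset (Fin n)) :=
  {A | ∃ h : A.card = B.card, ∀ i : Fin B.card,
      A.orderEmbOfFin h i ≤ B.orderEmbOfFin rfl i}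

/-- `L(g) = ⋃_{B ∈ g} L(B)`. -/
def LFam {n : ℕ} (g : Set (Finset (Fin n))) : Set (Finset (Fin n)) :=
  ⋃ B ∈ g, LSet B

/-- `L_*(g)`: the minimal (under inclusion) elements of `L(g)`. -/
def Lstar {n : ℕ} (g : Set (Finset (Fin n))) : Set (Finset (Fin n)) :=
  {A | A ∈ LFam g ∧ ∀ A' ∈ LFam g, A' ⊆ A → A' = A}

/-- The interval `[m] = {1,…,m}` inside `Fin n` (1-based). -/
def Ival (n m : ℕ) : Finset (Fin n) := Finset.univ.filter fun x => (x : ℕ) < m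

/-- `D(E) = {σ : fix(σ) ∩ [s⁺(E)] = E}`. -/
def DSet {n : ℕ} (E : Finset (Fin n)) : Set (Equiv.Perm (Fin n)) :=
  {σ | fixSet σ ∩ Ival n (sPlus E) = E}

/-- For a maximal, fixed and compressed `t`-cycle-intersecting family `F` and a
generating set `g ∈ G_*(F)`, `F` is the disjoint union over `E ∈ g` of the sets
`D(E) = {σ : fix(σ) ∩ [s⁺(E)] = E}`. -/

lemma aux_card_lt {k : ℕ} (i : Fin k) :
    (Finset.univ.filter fun j : Fin k => (j:ℕ) < i).card = i := by
  have : (Finset.univ.filter fun j : Fin k => (j:ℕ) < i) = Finset.Iio i := by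
    ext j; simp only [mem_filter, mem_univ, true_and, Finset.mem_Iio, Fin.lt_iff_val_lt_val]
  rw [this, Fin.card_Iio]

lemma aux_card_le {k : ℕ} (i : Fin k) :
    (Finset.univ.filter fun j : Fin k => (j:ℕ) ≤ i).card = i + 1 := by
  have : (Finset.univ.filter fun j : Fin k => (j:ℕ) ≤ i) = Finset.Iic i := by
    ext j; simp only [mem_filter, mem_univ, true_and, Finset.mem_Iic, Fin.le_iff_val_le_val]
  rw [this, Fin.card_Iic]

lemma aux_orderEmb_le_of_count {n k : ℕ} (A : Finset (Fin n)) (h : A.card = k) (i : Fin k)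
    (y : Fin n) (hc : (i:ℕ) + 1 ≤ (A.filter (· ≤ y)).card) : A.orderEmbOfFin h i ≤ y := by
  by_contra hlt
  push_neg at hlt
  have hsub : A.filter (· ≤ y) ⊆
      (Finset.univ.filter fun j : Fin k => (j:ℕ) < i).image (A.orderEmbOfFin h) := by
    intro a ha
    rw [Finset.mem_filter] at ha
    have : a ∈ Set.range (A.orderEmbOfFin h) := by
      rw [Finset.range_orderEmbOfFin]; exact ha.1
    obtain ⟨j, hj⟩ := this
    have hji : j < i := by
      have : A.orderEmbOfFin h j < A.orderEmbOfFin h i :=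
        lt_of_le_of_lt (hj ▸ ha.2) hlt
      exact (OrderEmbedding.lt_iff_lt _).mp this
    exact Finset.mem_image.mpr ⟨j, Finset.mem_filter.mpr ⟨Finset.mem_univ _, hji⟩, hj⟩
  have h1 := Finset.card_le_card hsub
  have h2 := Finset.card_image_le (s := Finset.univ.filter fun j : Fin k => (j:ℕ) < i)
    (f := A.orderEmbOfFin h)
  rw [aux_card_lt] at h2
  omega

lemma aux_count_orderEmb {n k : ℕ} (A : Finset (Fin n)) (h : A.card = k) (i : Fin k) :
    (i:ℕ) + 1 ≤ (A.filter (· ≤ A.orderEmbOfFin h i)).card := by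
  have hsub : (Finset.univ.filter fun j : Fin k => (j:ℕ) ≤ i).image (A.orderEmbOfFin h) ⊆
      A.filter (· ≤ A.orderEmbOfFin h i) := by
    intro a ha
    obtain ⟨j, hj, rfl⟩ := Finset.mem_image.mp ha
    rw [Finset.mem_filter] at hj
    refine Finset.mem_filter.mpr ⟨Finset.orderEmbOfFin_mem A h j, ?_⟩
    exact (A.orderEmbOfFin h).monotone (Fin.le_iff_val_le_val.mpr hj.2)
  have := Finset.card_le_card hsub
  rwa [Finset.card_image_of_injective _ (A.orderEmbOfFin h).injective, aux_card_le] at this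

lemma aux_dom {n : ℕ} (A B : Finset (Fin n)) (hAB : A.card = B.card)
    (ψ : Fin n → Fin n) (hmem : ∀ b ∈ B, ψ b ∈ A) (hle : ∀ b ∈ B, ψ b ≤ b)
    (hinj : Set.InjOn ψ B) (i : Fin B.card) :
    A.orderEmbOfFin hAB i ≤ B.orderEmbOfFin rfl i := by
  apply aux_orderEmb_le_of_count
  set y := B.orderEmbOfFin rfl i with hy
  have h1 : (i:ℕ) + 1 ≤ (B.filter (· ≤ y)).card := aux_count_orderEmb B rfl i
  have h2 : (B.filter (· ≤ y)).card ≤ (A.filter (· ≤ y)).card := by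
    apply Finset.card_le_card_of_injOn ψ
    · intro b hb
      rw [Finset.mem_coe, Finset.mem_filter] at hb ⊢
      exact ⟨hmem b hb.1, le_trans (hle b hb.1) hb.2⟩
    · exact hinj.mono (fun b hb => (Finset.mem_filter.mp hb).1)
  omega

lemma aux_mem_Ival {n m : ℕ} (x : Fin n) : x ∈ Ival n m ↔ (x:ℕ) < m := by
  simp [Ival]

lemma aux_self_mem_LSet {n : ℕ} (E : Finset (Fin n)) : E ∈ LSet E :=
  ⟨rfl, fun _ => le_rfl⟩

theorem stmt14 {n t : ℕ} (F : Set (Equiv.Perm (Fin n)))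
    (hF : TCycleIntersecting t F)
    (hmax : ∀ σ ∉ F, ¬ TCycleIntersecting t (insert σ F))
    (hfix : IsFixedFam F) (hcomp : IsCompressedFam F)
    (g : Set (Finset (Fin n))) (hg : IsGenSet g F) (hstar : Lstar g = g) :
    F = (⋃ E ∈ g, DSet E) ∧
      ∀ E₁ ∈ g, ∀ E₂ ∈ g, E₁ ≠ E₂ → DSet E₁ ∩ DSet E₂ = (∅ : Set (Equiv.Perm (Fin n))) := by
  have hUp : UpFam g = F := hg.2
  have hgL : ∀ E ∈ g, E ∈ LFam g := fun E hE =>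
    Set.mem_biUnion hE (aux_self_mem_LSet E)
  have hminimal : ∀ E ∈ g, ∀ A' ∈ LFam g, A' ⊆ E → A' = E := by
    intro E hE
    rw [← hstar] at hE
    exact hE.2
  -- key : if σ ∈ DSet E₁ ∩ DSet E₂ with E₁, E₂ ∈ g and s⁺E₁ ≤ s⁺E₂ then E₁ = E₂
  have key : ∀ σ : Equiv.Perm (Fin n), ∀ E₁ ∈ g, ∀ E₂ ∈ g, sPlus E₁ ≤ sPlus E₂ →
      σ ∈ DSet E₁ → σ ∈ DSet E₂ → E₁ = E₂ := by
    intro σ E₁ h₁ E₂ h₂ hs hσ1 hσ2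
    have hE1 : fixSet σ ∩ Ival n (sPlus E₁) = E₁ := hσ1
    have hE2 : fixSet σ ∩ Ival n (sPlus E₂) = E₂ := hσ2
    have hsub : E₁ ⊆ E₂ := by
      intro x hx
      rw [← hE1, Finset.mem_inter] at hx
      rw [← hE2, Finset.mem_inter]
      refine ⟨hx.1, ?_⟩
      rw [aux_mem_Ival] at hx ⊢
      omega
    exact hminimal E₂ h₂ E₁ (hgL E₁ h₁) hsub
  constructor
  · ext σ
    constructor
    · -- F ⊆ ⋃ E ∈ g, DSet E
      intro hσ
      rw [← hUp] at hσ
      obtain ⟨B, hBg, hBup⟩ := Set.mem_iUnion₂.mp hσ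
      have hBfix : B ⊆ fixSet σ := by
        intro x hx
        simp only [fixSet, Finset.mem_filter, Finset.mem_univ, true_and]
        exact hBup x hx
      have hne : ∃ m, ∃ C ∈ g, C ⊆ fixSet σ ∧ sPlus C = m := ⟨_, B, hBg, hBfix, rfl⟩
      obtain ⟨C, hCg, hCfix, hCm⟩ := Nat.find_spec hne
      refine Set.mem_iUnion₂.mpr ⟨C, hCg, ?_⟩
      show fixSet σ ∩ Ival n (sPlus C) = C
      refine Finset.Subset.antisymm ?_ ?_
      · -- hard direction
        by_contra hsub
        obtain ⟨x, hxmem, hxC⟩ := Finset.not_subset.mp hsub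
        obtain ⟨hxfix, hxIval⟩ := Finset.mem_inter.mp hxmem
        have hxlt : (x:ℕ) < sPlus C := (aux_mem_Ival x).mp hxIval
        have hCne : C.Nonempty := by
          by_contra h'
          rw [Finset.not_nonempty_iff_eq_empty] at h'
          simp only [h', sPlus, Finset.sup_empty, Nat.bot_eq_zero] at hxlt
          omega
        set b := C.max' hCne with hb
        have hbC : b ∈ C := C.max'_mem hCne
        have hsup : sPlus C = (b:ℕ) + 1 := by
          apply le_antisymm
          · exact Finset.sup_le fun a ha =>
              Nat.succ_le_succ (Fin.le_iff_val_le_val.mp (C.le_max' a ha))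
          · exact Finset.le_sup (f := fun x : Fin n => (x:ℕ) + 1) hbC
        have hxleb : (x:ℕ) ≤ (b:ℕ) := by omega
        have hxb : (x:ℕ) < (b:ℕ) := by
          refine lt_of_le_of_ne hxleb (fun he => hxC ?_)
          have : x = b := Fin.ext he
          rw [this]; exact hbC
        set C'' := insert x (C.erase b) with hC''def
        have hxe : x ∉ C.erase b := fun h' => hxC (Finset.mem_of_mem_erase h')
        have hcpos : 1 ≤ C.card := Finset.card_pos.mpr hCne
        have hcard : C''.card = C.card := by
          rw [hC''def, Finset.card_insert_of_notMem hxe, Finset.card_erase_of_mem hbC]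
          omega
        have hltC'' : ∀ a ∈ C'', (a:ℕ) < (b:ℕ) := by
          intro a ha
          rw [hC''def, Finset.mem_insert] at ha
          rcases ha with rfl | ha
          · exact hxb
          · have hab : a ≠ b := Finset.ne_of_mem_erase ha
            have : a ≤ b := C.le_max' a (Finset.mem_of_mem_erase ha)
            exact lt_of_le_of_ne (Fin.le_iff_val_le_val.mp this)
              (fun he => hab (Fin.ext he))
        have hC''L : C'' ∈ LSet C := by
          refine ⟨hcard, fun i => ?_⟩
          refine aux_dom C'' C hcard (fun a => if a = b then x else a) ?_ ?_ ?_ i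
          · intro a ha
            by_cases hab : a = b
            · simp only [hab, if_pos rfl]
              exact Finset.mem_insert_self _ _
            · simp only [if_neg hab]
              exact Finset.mem_insert_of_mem (Finset.mem_erase.mpr ⟨hab, ha⟩)
          · intro a ha
            by_cases hab : a = b
            · simp only [hab, if_pos rfl]
              exact Fin.le_iff_val_le_val.mpr hxleb
            · simp only [if_neg hab]
              exact le_rfl
          · intro a ha a' ha' hψ
            simp only at hψ
            by_cases hab : a = b <;> by_cases hab' : a' = b
            · rw [hab, hab']
            · rw [if_pos hab, if_neg hab'] at hψ
              exact absurd (hψ ▸ ha') hxC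
            · rw [if_neg hab, if_pos hab'] at hψ
              exact absurd (hψ ▸ ha) hxC
            · rwa [if_neg hab, if_neg hab'] at hψ
        have hC''fix : C'' ⊆ fixSet σ := by
          intro a ha
          rw [hC''def, Finset.mem_insert] at ha
          rcases ha with rfl | ha
          · exact hxfix
          · exact hCfix (Finset.mem_of_mem_erase ha)
        have hsC'' : sPlus C'' ≤ (b:ℕ) := Finset.sup_le fun a ha => hltC'' a ha
        -- minimal element of LFam g below C''
        have hC''mem : C'' ∈ Finset.univ.filter
            (fun E : Finset (Fin n) => E ∈ LFam g ∧ E ⊆ C'') :=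
          Finset.mem_filter.mpr ⟨Finset.mem_univ _,
            Set.mem_biUnion hCg hC''L, Finset.Subset.refl _⟩
        obtain ⟨E, hET, hEmin⟩ := Finset.exists_min_image _ Finset.card ⟨C'', hC''mem⟩
        rw [Finset.mem_filter] at hET
        obtain ⟨-, hEL, hEC''⟩ := hET
        have hEstar : E ∈ Lstar g := by
          refine ⟨hEL, fun A' hA' hA'E => ?_⟩
          refine Finset.eq_of_subset_of_card_le hA'E ?_
          exact hEmin A' (Finset.mem_filter.mpr
            ⟨Finset.mem_univ _, hA', hA'E.trans hEC''⟩)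
        have hEg : E ∈ g := hstar ▸ hEstar
        have hEfix : E ⊆ fixSet σ := hEC''.trans hC''fix
        have hElt : sPlus E < Nat.find hne := by
          have h1 : sPlus E ≤ sPlus C'' := Finset.sup_mono hEC''
          omega
        exact Nat.find_min hne hElt ⟨E, hEg, hEfix, rfl⟩
      · -- easy direction C ⊆ fixSet σ ∩ Ival
        intro x hx
        refine Finset.mem_inter.mpr ⟨hCfix hx, ?_⟩
        rw [aux_mem_Ival]
        exact Finset.le_sup (f := fun x : Fin n => (x:ℕ) + 1) hx
    · -- ⋃ ⊆ F
      intro hσ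
      obtain ⟨E, hEg, hED⟩ := Set.mem_iUnion₂.mp hσ
      rw [← hUp]
      refine Set.mem_biUnion hEg ?_
      intro x hx
      have hE : fixSet σ ∩ Ival n (sPlus E) = E := hED
      have : x ∈ fixSet σ := by
        rw [← hE] at hx
        exact (Finset.mem_inter.mp hx).1
      simpa only [fixSet, Finset.mem_filter, Finset.mem_univ, true_and] using this
  · -- disjointness
    intro E₁ h₁ E₂ h₂ hne12
    rw [Set.eq_empty_iff_forall_notMem]
    rintro σ ⟨hσ1, hσ2⟩
    rcases le_total (sPlus E₁) (sPlus E₂) with h | h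
    · exact hne12 (key σ E₁ h₁ E₂ h₂ h hσ1 hσ2)
    · exact hne12 (key σ E₂ h₂ E₁ h₁ h hσ2 hσ1).symm
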